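/- Let f(t₁) = k t₁³ − 2kt·t₁² + (kt² + x − y)t₁ + yt with k > 0, x > 0, y < 0, t > 0. At t = 0 the cubic discriminant D satisfies (3k)³D = (x−y)³ > 0, and D → +∞ as t → ∞; moreover, writing s = 8x + y, three distinct real roots occur for some t if and only if s < 0 (i.e., y < −8x), in the sense that the auxiliary discriminant P = s³y/16 is positive exactly when s < 0. -/

import Mathlib

/-- Discriminant behaviour of the type-C cubic for the linear wall:
`(3k)³ D(0) = (x-y)³ > 0`, `D(t) → +∞` as `t → ∞`, and (with `s = 8x+y`) the
auxiliary discriminant `P = s³y/16` is positive exactly when `s < 0`. -/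
theorem stmt_18 (k x y : ℝ) (hk : 0 < k) (hx : 0 < x) (hy : y < 0) :
    let D : ℝ → ℝ := fun t =>
      (t^4 * k^2 * x + t^2 * k * (2 * x^2 + 5 * x * y - y^2 / 4) + (x - y)^3) / (3 * k)^3
    let s : ℝ := 8 * x + y
    ((3 * k)^3 * D 0 = (x - y)^3) ∧ (0 < (x - y)^3) ∧
    Filter.Tendsto D Filter.atTop Filter.atTop ∧
    (0 < s^3 * y / 16 ↔ s < 0) := by
  intro D s
  have hk3 : (0:ℝ) < (3 * k)^3 := by positivity
  refine ⟨?_, ?_, ?_, ?_⟩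
  · show (3 * k)^3 * ((0^4 * k^2 * x + 0^2 * k * (2 * x^2 + 5 * x * y - y^2 / 4) + (x - y)^3) / (3 * k)^3) = (x - y)^3
    field_simp
    ring
  · have : 0 < x - y := by linarith
    positivity
  · set b := k * (2 * x^2 + 5 * x * y - y^2 / 4) with hb
    set C := (x - y)^3 / (3 * k)^3 with hC
    have hkx : (0:ℝ) < k^2 * x := by positivity
    have key : ∀ᶠ t in Filter.atTop, t^2 + C ≤ D t := by
      filter_upwards [Filter.eventually_ge_atTop
        (Real.sqrt (((3 * k)^3 + |b|) / (k^2 * x)))] with t hts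
      have hnn : 0 ≤ ((3 * k)^3 + |b|) / (k^2 * x) := by positivity
      have ht2 : ((3 * k)^3 + |b|) / (k^2 * x) ≤ t^2 := by
        nlinarith [Real.sq_sqrt hnn, Real.sqrt_nonneg (((3 * k)^3 + |b|) / (k^2 * x))]
      have h3 : (3 * k)^3 + |b| ≤ t^2 * (k^2 * x) := by
        rw [div_le_iff₀ hkx] at ht2; linarith
      have hbge : -|b| ≤ b := neg_abs_le b
      have hDt : D t = (t^4 * k^2 * x + t^2 * b + (x - y)^3) / (3 * k)^3 := by
        rw [hb]; simp only [D]; ring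
      rw [hDt, le_div_iff₀ hk3]
      have hCmul : C * (3 * k)^3 = (x - y)^3 := div_mul_cancel₀ _ (ne_of_gt hk3)
      nlinarith [sq_nonneg t, mul_le_mul_of_nonneg_left h3 (sq_nonneg t)]
    have h2 : Filter.Tendsto (fun t : ℝ => t^2 + C) Filter.atTop Filter.atTop := by
      exact Filter.tendsto_atTop_add_const_right _ C (Filter.tendsto_pow_atTop two_ne_zero)
    exact Filter.tendsto_atTop_mono' _ key h2
  · show 0 < (8*x+y)^3 * y / 16 ↔ 8*x+y < 0
    constructor
    · intro h
      by_contra hs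
      push_neg at hs
      have h1 : 0 ≤ (8*x+y)^3 := by positivity
      have h2 : (8*x+y)^3 * y ≤ 0 := mul_nonpos_of_nonneg_of_nonpos h1 hy.le
      linarith
    · intro hs
      have h1 : (8*x+y)^3 < 0 := Odd.pow_neg ⟨1, by norm_num⟩ hs
      have h2 : 0 < (8*x+y)^3 * y := mul_pos_of_neg_of_neg h1 hy
      positivity
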